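/- Suppose B, B_S, B_N, G, G_S, G_N, G_R : ℝ → ℝ are differentiable and satisfy B' + mBG + 4(B_N G_N + B_S G_S) = 0, B_S' + mB_S G + B G_S - 2B_N G_R = 0, and B_N' + mB_N G + B G_N + 2B_S G_R = 0. Then Δ := (1/4)B² - B_S² - B_N² satisfies Δ' + 2mGΔ = 0. -/

import Mathlib

/-- the discriminant Δ = (1/4)B² - B_S² - B_N² satisfies
Δ' + 2mGΔ = 0. -/
theorem stmt2 (m : ℝ) (B B_S B_N G G_S G_N G_R : ℝ → ℝ)
    (hB : ∀ t, HasDerivAt B (-(m * B t * G t + 4 * (B_N t * G_N t + B_S t * G_S t))) t)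
    (hBS : ∀ t, HasDerivAt B_S (-(m * B_S t * G t + B t * G_S t - 2 * B_N t * G_R t)) t)
    (hBN : ∀ t, HasDerivAt B_N (-(m * B_N t * G t + B t * G_N t + 2 * B_S t * G_R t)) t) :
    ∀ t, HasDerivAt (fun s => (1 / 4) * (B s) ^ 2 - (B_S s) ^ 2 - (B_N s) ^ 2)
      (-(2 * m * G t * ((1 / 4) * (B t) ^ 2 - (B_S t) ^ 2 - (B_N t) ^ 2))) t := by
  intro t
  have h := (((hB t).pow 2).const_mul ((1:ℝ)/4)).sub ((hBS t).pow 2) |>.sub ((hBN t).pow 2)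
  exact h.congr_deriv (by norm_num; ring)
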